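/- In PG(3,q) with q ≥ 5, every point not on the twisted cubic 𝒞 lies on exactly one chord of 𝒞 (where chords are real chords, tangents, or imaginary chords), and no two chords of 𝒞 meet off 𝒞. -/

import Mathlib

def twistedCubic (F : Type*) [Field F] : Option F → Fin 4 → F
  | some t => ![1, t, t ^ 2, t ^ 3]
  | none => ![0, 0, 0, 1]

/-- The chords of the twisted cubic, parametrized as follows.
`Sum.inl (c, d)` is the chord through the two roots (over `F` or its quadratic
extension, possibly coinciding) of `X² - cX - d`: it consists of the vectors
satisfying the linear recurrence `x_{k+2} = c·x_{k+1} + d·x_k`.  This family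
comprises the real chords through two affine points, the tangents at affine
points (double root) and the imaginary chords (irreducible quadratic).
`Sum.inr (Sum.inl t)` is the real chord through `P(t)` and `P(∞)`, and
`Sum.inr (Sum.inr ())` is the tangent at `P(∞)`. -/
def chordSet (F : Type*) [Field F] : (F × F) ⊕ (F ⊕ Unit) → Set (Fin 4 → F)
  | Sum.inl (c, d) => {x | x 2 = c * x 1 + d * x 0 ∧ x 3 = c * x 2 + d * x 1}
  | Sum.inr (Sum.inl t) => {x | x 1 = t * x 0 ∧ x 2 = t * x 1}
  | Sum.inr (Sum.inr _) => {x | x 0 = 0 ∧ x 1 = 0}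

/-- Every point of `PG(3,q)` off the twisted cubic lies on exactly one chord of the
cubic (real chord, tangent or imaginary chord); equivalently, no two chords meet
off the cubic. -/
theorem point_off_cubic_unique_chord (F : Type*) [Field F] [Fintype F]
    (hq : 5 ≤ Fintype.card F) (x : Fin 4 → F) (hx : x ≠ 0)
    (hxC : ∀ (t : Option F) (l : F), x ≠ l • twistedCubic F t) :
    ∃! p : (F × F) ⊕ (F ⊕ Unit), x ∈ chordSet F p := by
  by_cases h0 : x 0 = 0
  · by_cases h1 : x 1 = 0
    · by_cases h2 : x 2 = 0
      · exfalso
        apply hxC none (x 3)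
        funext i
        fin_cases i <;> simp [twistedCubic, h0, h1, h2]
      · refine ⟨Sum.inr (Sum.inr ()), ⟨h0, h1⟩, ?_⟩
        rintro (⟨c, d⟩ | t | ⟨⟩) hp
        · exact absurd (by rw [hp.1, h0, h1]; ring) h2
        · exact absurd (by rw [hp.2, hp.1, h0]; ring) h2
        · rfl
    · refine ⟨Sum.inl (x 2 / x 1, (x 3 * x 1 - x 2 ^ 2) / x 1 ^ 2), ⟨?_, ?_⟩, ?_⟩
      · rw [h0]; field_simp; ring
      · field_simp; ring
      · rintro (⟨c, d⟩ | t | ⟨⟩) hp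
        · obtain ⟨e1, e2⟩ := hp
          rw [h0] at e1
          simp only [Sum.inl.injEq, Prod.mk.injEq]
          constructor
          · field_simp
            linear_combination -e1
          · field_simp
            linear_combination x 2 * e1 - x 1 * e2
        · exact absurd (by rw [hp.1, h0]; ring) h1
        · exact absurd hp.2 h1
  · by_cases hdet : x 1 * x 1 = x 0 * x 2
    · -- point on the real chord through P(x1/x0) and P(∞)
      have h3 : x 3 * x 0 ≠ x 1 * x 2 := by
        intro h
        apply hxC (some (x 1 / x 0)) (x 0)
        funext i
        fin_cases i
        · show x 0 = (x 0 • twistedCubic F (some (x 1 / x 0))) 0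
          simp [twistedCubic]
        · show x 1 = (x 0 • twistedCubic F (some (x 1 / x 0))) 1
          simp [twistedCubic]
          field_simp
        · show x 2 = (x 0 • twistedCubic F (some (x 1 / x 0))) 2
          simp [twistedCubic]
          field_simp
          linear_combination -hdet
        · show x 3 = (x 0 • twistedCubic F (some (x 1 / x 0))) 3
          simp [twistedCubic]
          field_simp
          linear_combination x 0 * h - x 1 * hdet
      refine ⟨Sum.inr (Sum.inl (x 1 / x 0)),
        ⟨by field_simp, by field_simp; linear_combination -hdet⟩, ?_⟩
      rintro (⟨c, d⟩ | t' | ⟨⟩) hp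
      · exact absurd (by linear_combination x 0 * hp.2 - x 1 * hp.1 - c * hdet) h3
      · simp only [Sum.inr.injEq, Sum.inl.injEq]
        field_simp
        linear_combination -hp.1
      · exact absurd hp.1 h0
    · -- nondegenerate linear system: unique (c, d)
      have hD : x 1 * x 1 - x 0 * x 2 ≠ 0 := sub_ne_zero.mpr hdet
      refine ⟨Sum.inl ((x 1 * x 2 - x 0 * x 3) / (x 1 * x 1 - x 0 * x 2),
        (x 1 * x 3 - x 2 ^ 2) / (x 1 * x 1 - x 0 * x 2)), ⟨?_, ?_⟩, ?_⟩
      · rw [div_mul_eq_mul_div, div_mul_eq_mul_div, ← add_div, eq_div_iff hD]; ring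
      · rw [div_mul_eq_mul_div, div_mul_eq_mul_div, ← add_div, eq_div_iff hD]; ring
      · rintro (⟨c, d⟩ | t' | ⟨⟩) hp
        · obtain ⟨e1, e2⟩ := hp
          simp only [Sum.inl.injEq, Prod.mk.injEq]
          constructor
          · rw [eq_div_iff hD]
            linear_combination x 0 * e2 - x 1 * e1
          · rw [eq_div_iff hD]
            linear_combination x 2 * e1 - x 1 * e2
        · exact absurd (by linear_combination x 1 * hp.1 - x 0 * hp.2) hdet
        · exact absurd hp.1 h0
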